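/- Conical density lemma: For all integers d ≥ 1 and M ≥ 2 there exists N_0 ∈ ℕ with the following property: for every collection of (M^{d−1}+1)^{N_0} pairwise distinct cubes Q_1, …, Q_{(M^{d−1}+1)^{N_0}} from Q_{N_0}, there exists an index i such that for every x ∈ Q_i and every unit vector θ ∈ S^{d−1} there exists an index j with dist(Q_j, Q_i) > M^{-N_0} and Q_j ⊆ H(x,θ,4/5). -/

import Mathlib

open MeasureTheory ProbabilityTheory Filter Metric Set
open scoped ENNReal ProbabilityTheory RealInnerProductSpace

noncomputable section

/-- The closed `M`-adic cube of level `n` in `[0,1]^d` indexed by `k : Fin d → ℕ`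
(with `k i < M ^ n`). -/
def mCube (d M n : ℕ) (k : Fin d → ℕ) : Set (EuclideanSpace ℝ (Fin d)) :=
  {x | ∀ i, (k i : ℝ) / (M : ℝ) ^ n ≤ x i ∧ x i ≤ ((k i : ℝ) + 1) / (M : ℝ) ^ n}

/-- The open cone at `x` in direction `θ` with parameter `α`:
`H(x,θ,α) = {y : (y-x)·θ > α‖y-x‖}`. -/
def cone (d : ℕ) (x θ : EuclideanSpace ℝ (Fin d)) (α : ℝ) :
    Set (EuclideanSpace ℝ (Fin d)) :=
  {y | α * ‖y - x‖ < ⟪y - x, θ⟫}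

/-- The distance between two sets: `dist(A,B) = inf {dist x y : x ∈ A, y ∈ B}`. -/
def setDist {d : ℕ} (A B : Set (EuclideanSpace ℝ (Fin d))) : ℝ :=
  sInf (Set.image2 dist A B)

/-! ### Auxiliary material for the proof of statement 13 -/

set_option maxHeartbeats 1000000

/-- The center of the `M`-adic cube. -/
def ctr (d M N : ℕ) (k : Fin d → ℕ) : EuclideanSpace ℝ (Fin d) :=
  WithLp.toLp 2 (fun u => ((k u : ℝ) + 2⁻¹) / (M : ℝ) ^ N)

variable {d M N : ℕ}

lemma ctr_mem (hM : 0 < M) (k : Fin d → ℕ) : ctr d M N k ∈ mCube d M N k := by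
  intro i
  have hP : (0:ℝ) < (M:ℝ) ^ N := by positivity
  unfold ctr
  simp only [PiLp.toLp_apply]
  constructor
  · gcongr
    norm_num
  · gcongr
    norm_num

lemma coord_sub (x y : EuclideanSpace ℝ (Fin d)) (u : Fin d) : (x - y) u = x u - y u := rfl

lemma abs_coord_le_norm (v : EuclideanSpace ℝ (Fin d)) (u : Fin d) : |v u| ≤ ‖v‖ := by
  rw [EuclideanSpace.norm_eq]
  rw [← Real.sqrt_sq_eq_abs]
  apply Real.sqrt_le_sqrt
  have : ∀ i ∈ Finset.univ, (0:ℝ) ≤ ‖v i‖^2 := fun i _ => sq_nonneg _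
  calc (v u)^2 = ‖v u‖^2 := by rw [Real.norm_eq_abs, sq_abs]
  _ ≤ ∑ i, ‖v i‖^2 := Finset.single_le_sum this (Finset.mem_univ u)

lemma norm_le_of_coord (v : EuclideanSpace ℝ (Fin d)) {a : ℝ} (ha : 0 ≤ a)
    (h : ∀ u, |v u| ≤ a) : ‖v‖ ≤ d * a := by
  rw [EuclideanSpace.norm_eq]
  have hsum : ∑ i, ‖v i‖^2 ≤ (d : ℝ) * a^2 := by
    calc ∑ i, ‖v i‖^2 ≤ ∑ _i : Fin d, a^2 := by
          apply Finset.sum_le_sum; intro i _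
          rw [Real.norm_eq_abs]
          exact sq_le_sq' (by linarith [abs_nonneg (v i), (h i), neg_abs_le (v i)]) (h i)
    _ = (d:ℝ) * a^2 := by simp [Finset.sum_const]
  have hd2 : (d:ℝ) ≤ (d:ℝ)^2 := by
    have : d ≤ d^2 := Nat.le_self_pow two_ne_zero d
    exact_mod_cast this
  calc Real.sqrt (∑ i, ‖v i‖^2) ≤ Real.sqrt ((d*a)^2) := by
        apply Real.sqrt_le_sqrt; nlinarith [sq_nonneg a]
  _ = d * a := Real.sqrt_sq (by positivity)

/-- coordinates of two points of a cube differ by at most `δ`. -/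
lemma coord_diff_le {k : Fin d → ℕ} {x y : EuclideanSpace ℝ (Fin d)}
    (hx : x ∈ mCube d M N k) (hy : y ∈ mCube d M N k) (u : Fin d) :
    |x u - y u| ≤ ((M:ℝ)^N)⁻¹ := by
  obtain ⟨h1, h2⟩ := hx u
  obtain ⟨h3, h4⟩ := hy u
  rw [abs_le]
  have key : ((k u:ℝ)+1)/(M:ℝ)^N - (k u)/(M:ℝ)^N = ((M:ℝ)^N)⁻¹ := by
    rw [div_sub_div_same]
    norm_num
  constructor <;> linarith

lemma norm_sub_le_of_mem {k : Fin d → ℕ} {x y : EuclideanSpace ℝ (Fin d)}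
    (hx : x ∈ mCube d M N k) (hy : y ∈ mCube d M N k) :
    ‖x - y‖ ≤ d * ((M:ℝ)^N)⁻¹ := by
  apply norm_le_of_coord _ (by positivity)
  intro u; rw [coord_sub]; exact coord_diff_le hx hy u

lemma cube_nonempty (hM : 0 < M) (k : Fin d → ℕ) : (mCube d M N k).Nonempty :=
  ⟨ctr d M N k, ctr_mem hM k⟩

lemma ctr_norm_le (hM : 0 < M) {k : Fin d → ℕ} (hk : ∀ u, k u < M ^ N) :
    ‖ctr d M N k‖ ≤ d := by
  have hP : (0:ℝ) < (M:ℝ) ^ N := by positivity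
  have := norm_le_of_coord (ctr d M N k) (a := 1) zero_le_one ?_
  · simpa using this
  · intro u
    have h1 : ((k u : ℝ) + 1) ≤ (M:ℝ)^N := by
      have : (k u + 1 : ℕ) ≤ M^N := hk u
      exact_mod_cast this
    rw [abs_le]
    unfold ctr
    simp only [PiLp.toLp_apply]
    constructor
    · have : (0:ℝ) ≤ ((k u : ℝ) + 2⁻¹) / (M:ℝ)^N := by positivity
      linarith
    · rw [div_le_one hP]
      nlinarith [Nat.cast_nonneg (α := ℝ) (k u)]

/-- Key geometric lemma: a far cube whose center lies well inside the cone
(as seen from the center of the base cube) gives the desired conclusions. -/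
lemma good_pair (hd : 1 ≤ d) (hM : 2 ≤ M) (k k' : Fin d → ℕ)
    {x : EuclideanSpace ℝ (Fin d)} (hx : x ∈ mCube d M N k)
    {θ : EuclideanSpace ℝ (Fin d)} (hθ : ‖θ‖ = 1)
    (hfar : 40*d*((M:ℝ)^N)⁻¹ ≤ ‖ctr d M N k' - ctr d M N k‖)
    (hcone : (9/10)*‖ctr d M N k' - ctr d M N k‖ ≤ ⟪ctr d M N k' - ctr d M N k, θ⟫) :
    ((M:ℝ)^N)⁻¹ < setDist (mCube d M N k') (mCube d M N k) ∧
      mCube d M N k' ⊆ cone d x θ (4/5) := by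
  have hM0 : 0 < M := by omega
  have hδ : (0:ℝ) < ((M:ℝ)^N)⁻¹ := by positivity
  set δ : ℝ := ((M:ℝ)^N)⁻¹ with hδdef
  have hd1 : (1:ℝ) ≤ (d:ℝ) := by exact_mod_cast hd
  set v : EuclideanSpace ℝ (Fin d) := ctr d M N k' - ctr d M N k with hv
  have hvn : 40*δ ≤ ‖v‖ := by nlinarith [hfar]
  constructor
  · -- setDist
    apply lt_of_lt_of_le (show δ < 2*δ by linarith)
    apply le_csInf
    · exact ⟨_, Set.mem_image2_of_mem (cube_nonempty hM0 k').choose_spec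
        (cube_nonempty hM0 k).choose_spec⟩
    · rintro r ⟨y, hy, z, hz, rfl⟩
      have h1 : ‖y - ctr d M N k'‖ ≤ d * δ := norm_sub_le_of_mem hy (ctr_mem hM0 k')
      have h2 : ‖z - ctr d M N k‖ ≤ d * δ := norm_sub_le_of_mem hz (ctr_mem hM0 k)
      have htri : ‖v‖ ≤ ‖y - z‖ + ‖y - ctr d M N k'‖ + ‖z - ctr d M N k‖ := by
        have hdec : v = (y - z) - (y - ctr d M N k') + (z - ctr d M N k) := by
          rw [hv]; abel
        calc ‖v‖ ≤ ‖(y - z) - (y - ctr d M N k')‖ + ‖z - ctr d M N k‖ := by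
              rw [hdec]; exact norm_add_le _ _
        _ ≤ _ := by
              have := norm_sub_le (y-z) (y - ctr d M N k')
              linarith
      rw [dist_eq_norm]
      nlinarith [htri]
  · -- cone
    intro y hy
    have h1 : ‖y - ctr d M N k'‖ ≤ d * δ := norm_sub_le_of_mem hy (ctr_mem hM0 k')
    have h2 : ‖x - ctr d M N k‖ ≤ d * δ := norm_sub_le_of_mem hx (ctr_mem hM0 k)
    set e : EuclideanSpace ℝ (Fin d) := (y - ctr d M N k') - (x - ctr d M N k) with he
    have hye : y - x = v + e := by rw [hv, he]; abel
    have hen : ‖e‖ ≤ 2*(d*δ) := by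
      calc ‖e‖ ≤ ‖y - ctr d M N k'‖ + ‖x - ctr d M N k‖ := norm_sub_le _ _
      _ ≤ 2*(d*δ) := by linarith
    have hinner : (9/10)*‖v‖ - 2*(d*δ) ≤ ⟪y - x, θ⟫ := by
      rw [hye, inner_add_left]
      have := real_inner_le_norm e θ
      have h3 := real_inner_le_norm (-e) θ
      rw [inner_neg_left, norm_neg] at h3
      rw [hθ] at this h3
      linarith
    have hnorm : ‖y - x‖ ≤ ‖v‖ + 2*(d*δ) := by
      rw [hye]
      calc ‖v + e‖ ≤ ‖v‖ + ‖e‖ := norm_add_le _ _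
      _ ≤ _ := by linarith
    show (4/5) * ‖y - x‖ < ⟪y - x, θ⟫
    have hdd : d*δ ≤ (1/40 : ℝ) * ‖v‖ := by nlinarith
    nlinarith [norm_nonneg (y - x), hinner, hnorm]

lemma frank (hd : 1 ≤ d) {τ : EuclideanSpace ℝ (Fin d)} (hτ : ‖τ‖ = 1) :
    Module.finrank ℝ ((ℝ ∙ τ)ᗮ : Submodule ℝ (EuclideanSpace ℝ (Fin d))) = d - 1 := by
  have hτ0 : τ ≠ 0 := by intro h; rw [h, norm_zero] at hτ; norm_num at hτ
  have h1 : Module.finrank ℝ (ℝ ∙ τ : Submodule ℝ (EuclideanSpace ℝ (Fin d))) = 1 :=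
    finrank_span_singleton hτ0
  have h2 := Submodule.finrank_add_finrank_orthogonal
    (K := (ℝ ∙ τ : Submodule ℝ (EuclideanSpace ℝ (Fin d))))
  rw [h1, finrank_euclideanSpace_fin] at h2
  omega

lemma parseval_contra (hd : 1 ≤ d) {τ : EuclideanSpace ℝ (Fin d)} (hτ : ‖τ‖ = 1)
    {δ : ℝ} (hδ : 0 < δ) {v : EuclideanSpace ℝ (Fin d)}
    (hfar : 40*d*δ ≤ ‖v‖) (hinner : |⟪v, τ⟫| ≤ (19/20)*‖v‖)
    (hsmall : ∀ m, |⟪v, ((stdOrthonormalBasis ℝ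
        ((ℝ ∙ τ)ᗮ : Submodule ℝ (EuclideanSpace ℝ (Fin d)))) m :
          EuclideanSpace ℝ (Fin d))⟫| < 12*δ) :
    False := by
  set F : Submodule ℝ (EuclideanSpace ℝ (Fin d)) := (ℝ ∙ τ)ᗮ with hF
  set b := stdOrthonormalBasis ℝ F with hb
  set c : ℝ := ⟪v, τ⟫ with hc
  set w : EuclideanSpace ℝ (Fin d) := v - c • τ with hw
  have hτself : ⟪τ, τ⟫ = 1 := by
    rw [real_inner_self_eq_norm_sq, hτ]; norm_num
  have hwF : w ∈ F := by
    rw [hF, Submodule.mem_orthogonal_singleton_iff_inner_right]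
    rw [hw, inner_sub_right, real_inner_smul_right, hτself, real_inner_comm]
    ring
  have hnw : ‖w‖^2 = ‖v‖^2 - c^2 := by
    have : ‖v - c • τ‖^2 = ‖v‖^2 - 2 * ⟪v, c • τ⟫ + ‖c • τ‖^2 := norm_sub_sq_real v (c • τ)
    rw [hw, this, real_inner_smul_right, norm_smul, hτ]
    simp [← hc, Real.norm_eq_abs, mul_pow, sq_abs]
    ring
  have hwsum : ‖w‖^2 = ∑ m, ⟪w, (b m : EuclideanSpace ℝ (Fin d))⟫^2 := by
    have hpar := b.sum_inner_mul_inner (⟨w, hwF⟩ : F) (⟨w, hwF⟩ : F)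
    have hconv : ∀ m, ⟪(⟨w, hwF⟩ : F), b m⟫ = ⟪w, (b m : EuclideanSpace ℝ (Fin d))⟫ := by
      intro m; rw [Submodule.coe_inner]
    have hconv2 : ∀ m, ⟪b m, (⟨w, hwF⟩ : F)⟫ = ⟪w, (b m : EuclideanSpace ℝ (Fin d))⟫ := by
      intro m; rw [real_inner_comm]; exact hconv m
    calc ‖w‖^2 = ⟪(⟨w, hwF⟩ : F), (⟨w, hwF⟩ : F)⟫ := by
          rw [Submodule.coe_inner, real_inner_self_eq_norm_sq]
    _ = ∑ m, ⟪(⟨w, hwF⟩ : F), b m⟫ * ⟪b m, (⟨w, hwF⟩ : F)⟫ := hpar.symm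
    _ = ∑ m, ⟪w, (b m : EuclideanSpace ℝ (Fin d))⟫^2 := by
          apply Finset.sum_congr rfl; intro m _; rw [hconv m, hconv2 m, sq]
  have hwb : ∀ m, ⟪w, (b m : EuclideanSpace ℝ (Fin d))⟫
      = ⟪v, (b m : EuclideanSpace ℝ (Fin d))⟫ := by
    intro m
    have hbm : ⟪τ, (b m : EuclideanSpace ℝ (Fin d))⟫ = 0 :=
      Submodule.mem_orthogonal_singleton_iff_inner_right.mp (b m).2
    rw [hw, inner_sub_left, real_inner_smul_left, hbm]
    ring
  have hrank : Module.finrank ℝ F = d - 1 := frank hd hτ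
  have hupper : ‖w‖^2 ≤ (d - 1 : ℕ) * (12*δ)^2 := by
    rw [hwsum]
    calc ∑ m, ⟪w, (b m : EuclideanSpace ℝ (Fin d))⟫^2
        ≤ ∑ _m : Fin (Module.finrank ℝ F), (12*δ)^2 := by
          apply Finset.sum_le_sum; intro m _
          rw [hwb m]
          rw [← sq_abs]
          exact pow_le_pow_left₀ (abs_nonneg _) (le_of_lt (hsmall m)) 2
    _ = (Module.finrank ℝ F : ℝ) * (12*δ)^2 := by simp [Finset.sum_const]
    _ = _ := by rw [hrank]
  have hlower : (39/400) * ‖v‖^2 ≤ ‖w‖^2 := by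
    rw [hnw]
    have : c^2 ≤ (19/20 * ‖v‖)^2 := by
      rw [← sq_abs c]
      exact pow_le_pow_left₀ (abs_nonneg _) hinner 2
    nlinarith [this]
  have hd1 : (1:ℝ) ≤ (d:ℝ) := by exact_mod_cast hd
  have hcast : ((d - 1 : ℕ) : ℝ) ≤ (d:ℝ) - 1 := by
    rw [Nat.cast_sub hd]; norm_num
  have hv2 : (40*(d:ℝ)*δ)^2 ≤ ‖v‖^2 := by
    apply pow_le_pow_left₀ (by positivity) hfar
  have hδ2 : (0:ℝ) < δ^2 := by positivity
  have hkey : (156:ℝ)*(d:ℝ)^2*δ^2 ≤ 144*((d:ℝ)-1)*δ^2 := by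
    nlinarith [hv2, hlower, hupper, hcast]
  nlinarith [hkey, hδ2, hd1, mul_pos hδ2 hδ2]

lemma abs_sub_lt_of_floor_eq {a b c : ℝ} (hc : 0 < c) (h : ⌊a/c⌋ = ⌊b/c⌋) : |a - b| < c := by
  have h1 := Int.lt_floor_add_one (a/c)
  have h2 := Int.floor_le (a/c)
  have h3 := Int.lt_floor_add_one (b/c)
  have h4 := Int.floor_le (b/c)
  rw [h] at h1 h2
  rw [abs_sub_lt_iff]
  constructor <;> · rw [← div_lt_one hc, sub_div]; linarith

lemma sphere_net (d : ℕ) : ∃ Θ : Finset (EuclideanSpace ℝ (Fin d)),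
    (∀ τ ∈ Θ, ‖τ‖ = 1) ∧
    ∀ θ : EuclideanSpace ℝ (Fin d), ‖θ‖ = 1 → ∃ τ ∈ Θ, dist θ τ < 1/20 := by
  have hcomp : IsCompact (sphere (0 : EuclideanSpace ℝ (Fin d)) 1) := isCompact_sphere 0 1
  have hcov : sphere (0 : EuclideanSpace ℝ (Fin d)) 1 ⊆
      ⋃ τ ∈ sphere (0 : EuclideanSpace ℝ (Fin d)) 1, ball τ (1/20) := by
    intro θ hθ
    exact mem_biUnion hθ (mem_ball_self (by norm_num))
  obtain ⟨s, hs_sub, hs_fin, hs_cov⟩ := hcomp.elim_finite_subcover_image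
    (fun τ _ => isOpen_ball) hcov
  refine ⟨hs_fin.toFinset, ?_, ?_⟩
  · intro τ hτ
    rw [Set.Finite.mem_toFinset] at hτ
    exact mem_sphere_zero_iff_norm.mp (hs_sub hτ)
  · intro θ hθ
    have := hs_cov (mem_sphere_zero_iff_norm.mpr hθ)
    rw [mem_iUnion₂] at this
    obtain ⟨τ, hτs, hθτ⟩ := this
    exact ⟨τ, (Set.Finite.mem_toFinset hs_fin).mpr hτs, mem_ball.mp hθτ⟩

theorem stmt13 (d M : ℕ) (hd : 1 ≤ d) (hM : 2 ≤ M) :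
    ∃ N₀ : ℕ, 0 < N₀ ∧
      ∀ Q : Fin ((M ^ (d - 1) + 1) ^ N₀) → (Fin d → ℕ),
        Function.Injective Q → (∀ j i, Q j i < M ^ N₀) →
        ∃ i, ∀ x ∈ mCube d M N₀ (Q i), ∀ θ : EuclideanSpace ℝ (Fin d), ‖θ‖ = 1 →
          ∃ j, (M : ℝ) ^ (-(N₀ : ℤ)) < setDist (mCube d M N₀ (Q j)) (mCube d M N₀ (Q i)) ∧
            mCube d M N₀ (Q j) ⊆ cone d x θ (4 / 5) := by
  classical
  obtain ⟨Θ, hΘ1, hΘ2⟩ := sphere_net d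
  set K : ℕ := M ^ (d - 1) with hK
  have hK1 : 1 ≤ K := Nat.one_le_two_pow.trans (by
    apply Nat.pow_le_pow_left; omega) |>.trans_eq rfl
  have hq : (1:ℝ) < ((K:ℝ)+1)/K := by
    rw [lt_div_iff₀ (by exact_mod_cast hK1 : (0:ℝ) < K)]
    have : (1:ℝ) ≤ (K:ℝ) := by exact_mod_cast hK1
    linarith
  set C : ℕ := Θ.card * (3*d)^(d-1) * (80*d+1)^d with hC
  obtain ⟨N₁, hN₁⟩ := pow_unbounded_of_one_lt (C:ℝ) hq
  refine ⟨N₁+1, Nat.succ_pos _, ?_⟩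
  set N : ℕ := N₁+1 with hN
  have hqN : (C:ℝ) < (((K:ℝ)+1)/K)^N :=
    hN₁.trans_le (pow_le_pow_right₀ hq.le (Nat.le_succ _))
  have hmainN : C * K^N < (K+1)^N := by
    have hKpos : (0:ℝ) < (K:ℝ)^N := by positivity
    rw [div_pow, lt_div_iff₀ hKpos] at hqN
    have : (C:ℝ) * (K:ℝ)^N < ((K:ℝ)+1)^N := hqN
    exact_mod_cast this
  intro Q hQinj hQlt
  by_contra hcon
  push_neg at hcon
  have hδeq : ((M:ℝ))^(-(N:ℤ)) = ((M:ℝ)^N)⁻¹ := by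
    rw [zpow_neg, zpow_natCast]
  choose xf hxf θf hθf hbad using hcon
  set δ : ℝ := ((M:ℝ)^N)⁻¹ with hδdef
  have hδpos : (0:ℝ) < δ := by positivity
  set c : Fin ((K+1)^N) → EuclideanSpace ℝ (Fin d) := fun i => ctr d M N (Q i) with hcdef
  -- bad cubes avoid the 9/10-cone in direction θf at far centers
  have havoid : ∀ i j, 40*d*δ ≤ ‖c j - c i‖ → ⟪c j - c i, θf i⟫ < (9/10)*‖c j - c i‖ := by
    intro i j hfar
    by_contra hge
    push_neg at hge
    obtain ⟨hdist, hsub⟩ := good_pair hd hM (Q i) (Q j) (hxf i) (hθf i) hfar hge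
    exact (hbad i j (by rw [hδeq]; exact hdist)) hsub
  have hτex : ∀ i, ∃ τ ∈ Θ, dist (θf i) τ < 1/20 := fun i => hΘ2 _ (hθf i)
  choose τf hτΘ hτcl using hτex
  have havoid2 : ∀ i j, τf j = τf i → 40*d*δ ≤ ‖c j - c i‖ →
      |⟪c j - c i, τf i⟫| ≤ (19/20)*‖c j - c i‖ := by
    have key : ∀ i j, 40*d*δ ≤ ‖c j - c i‖ → ⟪c j - c i, τf i⟫ < (19/20)*‖c j - c i‖ := by
      intro i j hfar
      have hvpos : (0:ℝ) < ‖c j - c i‖ := lt_of_lt_of_le (by positivity) hfar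
      have ha := havoid i j hfar
      have hsplit : ⟪c j - c i, τf i⟫ = ⟪c j - c i, θf i⟫ + ⟪c j - c i, τf i - θf i⟫ := by
        rw [← inner_add_right]
        congr 1
        abel
      have hcs : ⟪c j - c i, τf i - θf i⟫ ≤ ‖c j - c i‖ * ‖τf i - θf i‖ :=
        real_inner_le_norm _ _
      have hdist : ‖τf i - θf i‖ < 1/20 := by
        rw [← dist_eq_norm, dist_comm]
        exact hτcl i
      nlinarith [hcs, hdist, hvpos]
    intro i j hττ hfar
    rw [abs_le]
    constructor
    · have hfar' : 40*d*δ ≤ ‖c i - c j‖ := by rw [norm_sub_rev]; exact hfar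
      have := key j i hfar'
      rw [hττ] at this
      have hneg : ⟪c i - c j, τf i⟫ = -⟪c j - c i, τf i⟫ := by
        rw [← inner_neg_left, neg_sub]
      rw [hneg, norm_sub_rev (c i)] at this
      linarith
    · exact (key i j hfar).le
  -- the fiber of a fixed net direction τ
  have hfib : ∀ τ ∈ Θ, (Finset.univ.filter fun i => τf i = τ).card ≤
      (2*(d*M^N)+1)^(d-1) * (80*d+1)^d := by
    intro τ hτmem
    set P := Finset.univ.filter fun i => τf i = τ with hPdef
    have hτn : ‖τ‖ = 1 := hΘ1 τ hτmem
    have hPfar : ∀ p ∈ P, ∀ r ∈ P, 40*d*δ ≤ ‖c r - c p‖ →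
        |⟪c r - c p, τ⟫| ≤ (19/20)*‖c r - c p‖ := by
      intro p hp r hr hfar
      have hτp : τf p = τ := (Finset.mem_filter.mp hp).2
      have hτr : τf r = τ := (Finset.mem_filter.mp hr).2
      have := havoid2 p r (by rw [hτp, hτr]) hfar
      rw [hτp] at this
      exact this
    -- maximal separated subset S
    set 𝒮 := P.powerset.filter
      (fun S => ∀ a ∈ S, ∀ a2 ∈ S, a ≠ a2 → 40*d*δ ≤ ‖c a2 - c a‖) with h𝒮def
    have h𝒮ne : 𝒮.Nonempty := ⟨∅, Finset.mem_filter.mpr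
      ⟨Finset.empty_mem_powerset _, by simp⟩⟩
    obtain ⟨S, hS𝒮, hSmax⟩ := Finset.exists_max_image 𝒮 Finset.card h𝒮ne
    have hSP : S ⊆ P := Finset.mem_powerset.mp (Finset.mem_filter.mp hS𝒮).1
    have hSsep : ∀ a ∈ S, ∀ a2 ∈ S, a ≠ a2 → 40*d*δ ≤ ‖c a2 - c a‖ :=
      (Finset.mem_filter.mp hS𝒮).2
    have hcover : ∀ p ∈ P, ∃ s ∈ S, ‖c p - c s‖ < 40*d*δ := by
      intro p hp
      by_cases hpS : p ∈ S
      · refine ⟨p, hpS, ?_⟩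
        simp only [sub_self, norm_zero]
        positivity
      · by_contra hno
        push_neg at hno
        have hins : insert p S ∈ 𝒮 := by
          rw [h𝒮def, Finset.mem_filter]
          constructor
          · rw [Finset.mem_powerset]
            intro a ha
            rcases Finset.mem_insert.mp ha with rfl | haS
            · exact hp
            · exact hSP haS
          · intro a ha a2 ha2 hne
            rcases Finset.mem_insert.mp ha with rfl | haS
            · rcases Finset.mem_insert.mp ha2 with rfl | ha2S
              · exact absurd rfl hne
              · rw [norm_sub_rev]
                exact hno a2 ha2S
            · rcases Finset.mem_insert.mp ha2 with rfl | ha2S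
              · exact hno a haS
              · exact hSsep a haS a2 ha2S hne
        have := hSmax _ hins
        rw [Finset.card_insert_of_notMem hpS] at this
        omega
    choose! sf hsf1 hsf2 using hcover
    -- count P against S with bounded multiplicity
    have hP1 : P.card ≤ S.card * (80*d+1)^d := by
      have hcard2 : (S ×ˢ Fintype.piFinset
          (fun _ : Fin d => Finset.Icc (-(40*(d:ℤ))) (40*d))).card
          = S.card * (80*d+1)^d := by
        rw [Finset.card_product]
        congr 1
        rw [Fintype.card_piFinset]
        have : (Finset.Icc (-(40*(d:ℤ))) (40*d)).card = 80*d+1 := by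
          rw [Int.card_Icc]
          omega
        simp [this]
      rw [← hcard2]
      apply Finset.card_le_card_of_injOn
        (fun p => (sf p, fun u => (Q p u : ℤ) - (Q (sf p) u : ℤ)))
      · intro p hp
        rw [Finset.mem_coe, Finset.mem_product]
        refine ⟨hsf1 p hp, ?_⟩
        rw [Fintype.mem_piFinset]
        intro u
        show ((Q p u : ℤ) - (Q (sf p) u : ℤ)) ∈ Finset.Icc (-(40*(d:ℤ))) (40*d)
        rw [Finset.mem_Icc]
        have hco : |(c p - c (sf p)) u| ≤ ‖c p - c (sf p)‖ := abs_coord_le_norm _ u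
        have hcoord : (c p - c (sf p)) u = ((Q p u : ℝ) - (Q (sf p) u : ℝ)) * δ := by
          rw [coord_sub, hcdef]
          show ((Q p u : ℝ) + 2⁻¹)/(M:ℝ)^N - ((Q (sf p) u : ℝ) + 2⁻¹)/(M:ℝ)^N = _
          rw [div_sub_div_same, hδdef, div_eq_mul_inv]
          ring_nf
        have habs : |((Q p u : ℝ) - (Q (sf p) u : ℝ))| * δ < 40*d*δ := by
          calc |((Q p u : ℝ) - (Q (sf p) u : ℝ))| * δ
              = |((Q p u : ℝ) - (Q (sf p) u : ℝ)) * δ| := by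
                rw [abs_mul, abs_of_pos hδpos]
          _ = |(c p - c (sf p)) u| := by rw [hcoord]
          _ ≤ ‖c p - c (sf p)‖ := hco
          _ < 40*d*δ := hsf2 p hp
        have habs2 : |((Q p u : ℝ) - (Q (sf p) u : ℝ))| < 40*d :=
          lt_of_mul_lt_mul_right (by linarith [habs]) hδpos.le
        have habs3 : -(40*(d:ℤ)) < (Q p u : ℤ) - (Q (sf p) u : ℤ) ∧
            (Q p u : ℤ) - (Q (sf p) u : ℤ) < 40*d := by
          rw [abs_lt] at habs2
          constructor
          · exact_mod_cast habs2.1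
          · exact_mod_cast habs2.2
        omega
      · intro p hp r hr heq
        simp only [Prod.mk.injEq] at heq
        obtain ⟨h1, h2⟩ := heq
        apply hQinj
        funext u
        have h3 := congrFun h2 u
        rw [h1] at h3
        have : (Q p u : ℤ) = (Q r u : ℤ) := by omega
        exact_mod_cast this
    -- bound the separated set S via a grid in the hyperplane orthogonal to τ
    have hS2 : S.card ≤ (2*(d*M^N)+1)^(d-1) := by
      set b := stdOrthonormalBasis ℝ ((ℝ ∙ τ)ᗮ : Submodule ℝ (EuclideanSpace ℝ (Fin d)))
        with hbdef
      set B : ℤ := ((d*M^N : ℕ) : ℤ) with hBdef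
      have htarget : (Fintype.piFinset (fun _ : Fin (Module.finrank ℝ
          ((ℝ ∙ τ)ᗮ : Submodule ℝ (EuclideanSpace ℝ (Fin d)))) =>
            Finset.Icc (-B) B)).card = (2*(d*M^N)+1)^(d-1) := by
        rw [Fintype.card_piFinset]
        have hI : (Finset.Icc (-B) B).card = 2*(d*M^N)+1 := by
          rw [Int.card_Icc, hBdef]
          omega
        simp [hI, frank hd hτn]
      rw [← htarget]
      apply Finset.card_le_card_of_injOn
        (fun s_ => (fun m => ⌊⟪c s_, (b m : EuclideanSpace ℝ (Fin d))⟫ / (12*δ)⌋))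
      · intro p hp
        rw [Finset.mem_coe, Fintype.mem_piFinset]
        intro m
        rw [Finset.mem_Icc]
        have hcs : |⟪c p, (b m : EuclideanSpace ℝ (Fin d))⟫| ≤ (d:ℝ) := by
          have h1 := abs_real_inner_le_norm (c p) (b m : EuclideanSpace ℝ (Fin d))
          have h2 : ‖(b m : EuclideanSpace ℝ (Fin d))‖ = 1 := b.orthonormal.1 m
          have h3 : ‖c p‖ ≤ (d:ℝ) := ctr_norm_le (by omega) (fun u => hQlt p u)
          rw [h2, mul_one] at h1
          exact h1.trans h3
        have hBr : (d:ℝ) / (12*δ) ≤ (B:ℝ) := by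
          rw [hδdef]
          rw [div_le_iff₀ (by positivity)]
          have hMN : (1:ℝ) ≤ (M:ℝ)^N := one_le_pow₀ (by exact_mod_cast (by omega : 1 ≤ M))
          have hBval : (B:ℝ) = (d:ℝ) * (M:ℝ)^N := by
            rw [hBdef]
            push_cast
            ring
          rw [hBval]
          have hd0 : (0:ℝ) ≤ d := Nat.cast_nonneg d
          have hMNpos : (0:ℝ) < (M:ℝ)^N := by positivity
          have hδval : (12:ℝ) * ((M:ℝ)^N)⁻¹ * (M:ℝ)^N = 12 := by
            field_simp
          nlinarith [mul_le_mul_of_nonneg_left hMN hd0]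
        have hq1 : ⟪c p, (b m : EuclideanSpace ℝ (Fin d))⟫ / (12*δ) ≤ (B:ℝ) := by
          have : ⟪c p, (b m : EuclideanSpace ℝ (Fin d))⟫ / (12*δ) ≤ (d:ℝ)/(12*δ) := by
            apply div_le_div_of_nonneg_right ?_ (by positivity)
            exact (le_abs_self _).trans hcs
          exact this.trans hBr
        have hq2 : -(B:ℝ) ≤ ⟪c p, (b m : EuclideanSpace ℝ (Fin d))⟫ / (12*δ) := by
          have : -((d:ℝ)/(12*δ)) ≤ ⟪c p, (b m : EuclideanSpace ℝ (Fin d))⟫ / (12*δ) := by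
            rw [neg_le, ← neg_div]
            apply div_le_div_of_nonneg_right ?_ (by positivity)
            have := neg_abs_le ⟪c p, (b m : EuclideanSpace ℝ (Fin d))⟫
            linarith [hcs]
          refine le_trans ?_ this
          simp only [neg_le_neg_iff]
          exact hBr
        constructor
        · rw [Int.le_floor]
          exact_mod_cast hq2
        · have : (⌊⟪c p, (b m : EuclideanSpace ℝ (Fin d))⟫ / (12*δ)⌋ : ℤ) ≤ ⌊(B:ℝ)⌋ :=
            Int.floor_le_floor hq1
          rwa [Int.floor_intCast] at this
      · intro p hp r hr heq
        by_contra hne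
        have hsep : 40*d*δ ≤ ‖c r - c p‖ := hSsep p hp r hr hne
        have hinner : |⟪c r - c p, τ⟫| ≤ (19/20)*‖c r - c p‖ :=
          hPfar p (hSP hp) r (hSP hr) hsep
        apply parseval_contra hd hτn hδpos hsep hinner
        intro m
        have hfl : ⌊⟪c p, (b m : EuclideanSpace ℝ (Fin d))⟫ / (12*δ)⌋
            = ⌊⟪c r, (b m : EuclideanSpace ℝ (Fin d))⟫ / (12*δ)⌋ := by
          have := congrFun heq m
          exact this
        have hlt := abs_sub_lt_of_floor_eq (by positivity : (0:ℝ) < 12*δ) hfl.symm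
        rw [inner_sub_left]
        rwa [hbdef] at hlt
    calc P.card ≤ S.card * (80*d+1)^d := hP1
    _ ≤ (2*(d*M^N)+1)^(d-1) * (80*d+1)^d := Nat.mul_le_mul_right _ hS2
  -- final counting
  have hsum : (Finset.univ : Finset (Fin ((K+1)^N))).card
      = ∑ τ ∈ Θ, (Finset.univ.filter fun i => τf i = τ).card :=
    Finset.card_eq_sum_card_fiberwise (fun i _ => hτΘ i)
  have h1 : (K+1)^N ≤ Θ.card * ((2*(d*M^N)+1)^(d-1) * (80*d+1)^d) := by
    have hcardu : (Finset.univ : Finset (Fin ((K+1)^N))).card = (K+1)^N := by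
      simp
    rw [← hcardu, hsum]
    have := Finset.sum_le_card_nsmul Θ (fun τ => (Finset.univ.filter fun i => τf i = τ).card)
      ((2*(d*M^N)+1)^(d-1) * (80*d+1)^d) (fun τ hτ => hfib τ hτ)
    simpa [smul_eq_mul] using this
  have h2 : Θ.card * ((2*(d*M^N)+1)^(d-1) * (80*d+1)^d) ≤ C * K^N := by
    have hx1 : 1 ≤ d*M^N := by
      have : 1 ≤ M^N := Nat.one_le_pow _ _ (by omega)
      exact Nat.one_le_iff_ne_zero.mpr (by positivity)
    have hb1 : 2*(d*M^N)+1 ≤ 3*(d*M^N) := by omega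
    have hb2 : (2*(d*M^N)+1)^(d-1) ≤ (3*(d*M^N))^(d-1) := Nat.pow_le_pow_left hb1 _
    have hb3 : (3*(d*M^N))^(d-1) = (3*d)^(d-1) * K^N := by
      have : 3*(d*M^N) = (3*d) * M^N := by ring
      rw [this, mul_pow, hK, ← pow_mul, ← pow_mul, Nat.mul_comm N (d-1)]
    calc Θ.card * ((2*(d*M^N)+1)^(d-1) * (80*d+1)^d)
        ≤ Θ.card * (((3*d)^(d-1) * K^N) * (80*d+1)^d) := by
          apply Nat.mul_le_mul_left
          apply Nat.mul_le_mul_right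
          rw [← hb3]
          exact hb2
    _ = C * K^N := by rw [hC]; ring
  exact Nat.lt_irrefl _ (lt_of_le_of_lt (h1.trans h2) hmainN)
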